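/- arXiv:2202.10515 — 5 statements merged into one kernel-verified Lean document; each statement's English description precedes it below -/
import Mathlib

section
/- A (k-1)-tree with n vertices has exactly (3n - 2k)(k-1)(k-2)/6 triangles. -/
lemma six_dvd' (k : ℕ) : 6 ∣ k*(k-1)*(k-2) := by
  have := Nat.factorial_dvd_descFactorial k 3
  simpa [Nat.descFactorial, Nat.factorial, mul_comm, mul_assoc, mul_left_comm] using this

lemma two_dvd' (k : ℕ) : 2 ∣ (k-1)*(k-2) := by
  rcases le_or_gt k 1 with h|h
  · interval_cases k <;> simp
  · have h1 : k - 1 = (k-2)+1 := by omega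
    rw [h1, mul_comm]
    exact (Nat.even_mul_succ_self (k-2)).two_dvd

lemma arith_step' (k m : ℕ) (hk : k ≤ m) :
    (3*(m+1) - 2*k)*(k-1)*(k-2)/6 = (3*m - 2*k)*(k-1)*(k-2)/6 + (k-1)*(k-2)/2 := by
  obtain ⟨y, hy⟩ := two_dvd' k
  have h6 : 6 ∣ (3*m - 2*k)*(k-1)*(k-2) := by
    have e : (3*m-2*k)*(k-1)*(k-2) = 3*(m-k)*((k-1)*(k-2)) + k*(k-1)*(k-2) := by
      have : 3*m-2*k = 3*(m-k)+k := by omega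
      rw [this]; ring
    rw [e]
    refine dvd_add ⟨(m-k)*y, ?_⟩ (six_dvd' k)
    rw [hy]; ring
  obtain ⟨x, hx⟩ := h6
  have e1 : (3*(m+1)-2*k)*(k-1)*(k-2) = 6*x + 6*y := by
    have h3 : 3*(m+1)-2*k = (3*m-2*k)+3 := by omega
    rw [h3, show ((3*m-2*k)+3)*(k-1)*(k-2)
        = (3*m-2*k)*(k-1)*(k-2) + 3*((k-1)*(k-2)) from by ring, hx, hy]
    ring
  rw [e1, hx, hy]
  omega

lemma choose_three' (n : ℕ) : n.choose 3 = n*(n-1)*(n-2)/6 := by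
  rw [Nat.choose_eq_descFactorial_div_factorial]
  simp [Nat.descFactorial, Nat.factorial]
  ring_nf

/-- A `(k-1)`-tree on vertex set `Fin n`, built by starting with a complete graph on the
first `k` vertices and attaching each later vertex `j` to `k-1` earlier vertices that
together with `j` form a `k`-clique. -/
def IsKm1Tree (k n : ℕ) (G : SimpleGraph (Fin n)) [DecidableRel G.Adj] : Prop :=
  k ≤ n ∧
  (∀ i j : Fin n, (i : ℕ) < k → (j : ℕ) < k → i ≠ j → G.Adj i j) ∧
  (∀ j : Fin n, k ≤ (j : ℕ) →
    (Finset.univ.filter (fun i : Fin n => (i : ℕ) < (j : ℕ) ∧ G.Adj i j)).card = k - 1 ∧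
    G.IsClique (insert j {i : Fin n | (i : ℕ) < (j : ℕ) ∧ G.Adj i j}))

lemma aux_main (k : ℕ) : ∀ n (G : SimpleGraph (Fin n)) [DecidableRel G.Adj],
    IsKm1Tree k n G → (G.cliqueFinset 3).card = (3 * n - 2 * k) * (k - 1) * (k - 2) / 6 := by
  intro n
  induction n with
  | zero =>
    intro G _ h
    have hk0 : k = 0 := Nat.le_zero.mp h.1
    subst hk0
    have hempty : G.cliqueFinset 3 = ∅ := by
      apply Finset.eq_empty_of_forall_notMem
      intro s hs
      rw [SimpleGraph.mem_cliqueFinset_iff] at hs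
      have h3 := hs.2
      have hc0 : s.card ≤ 0 := by simpa using Finset.card_le_univ s
      omega
    simp [hempty]
  | succ m ih =>
    intro G instG h
    obtain ⟨hkn, hsmall, hbig⟩ := h
    by_cases hkm : k = m + 1
    · -- base case: complete graph
      subst hkm
      have hT : G.cliqueFinset 3 = Finset.univ.powersetCard 3 := by
        ext s
        rw [SimpleGraph.mem_cliqueFinset_iff, Finset.mem_powersetCard]
        constructor
        · intro hs; exact ⟨Finset.subset_univ s, hs.2⟩
        · intro hs
          refine ⟨?_, hs.2⟩
          intro a _ b _ hab
          exact hsmall a b a.isLt b.isLt hab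
      rw [hT, Finset.card_powersetCard, Finset.card_univ, Fintype.card_fin, choose_three']
      have h3 : 3*(m+1)-2*(m+1) = m+1 := by omega
      rw [h3]
    · -- inductive step
      have hkm' : k ≤ m := by omega
      set L : Fin (m+1) := Fin.last m with hLdef
      have hLval : (L : ℕ) = m := rfl
      set G' : SimpleGraph (Fin m) := SimpleGraph.comap Fin.castSucc G with hG'def
      haveI instG' : DecidableRel G'.Adj := fun a b => instG _ _
      have hadj' : ∀ a b : Fin m, G'.Adj a b ↔ G.Adj a.castSucc b.castSucc := by
        intro a b; rw [hG'def]; exact Iff.rfl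
      -- G' is a (k-1)-tree on Fin m
      have hG' : IsKm1Tree k m G' := by
        refine ⟨hkm', ?_, ?_⟩
        · intro i j hi hj hij
          rw [hadj']
          exact hsmall _ _ (by simpa using hi) (by simpa using hj)
            (fun e => hij (Fin.castSucc_injective m e))
        · intro j hj
          obtain ⟨hc, hcl⟩ := hbig j.castSucc (by simpa using hj)
          constructor
          · rw [← hc]
            apply Finset.card_bij (fun (a : Fin m) _ => a.castSucc)
            · intro a ha
              simp only [Finset.mem_filter, Finset.mem_univ, true_and] at ha ⊢
              exact ⟨by simpa using ha.1, (hadj' a j).mp ha.2⟩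
            · intro a _ b _ e
              exact Fin.castSucc_injective m e
            · intro b hb
              simp only [Finset.mem_filter, Finset.mem_univ, true_and] at hb
              have hbm : (b : ℕ) < m := lt_of_lt_of_le (by simpa using hb.1) (Nat.le_of_lt_succ j.castSucc.isLt)
              refine ⟨⟨(b : ℕ), hbm⟩, ?_, ?_⟩
              · simp only [Finset.mem_filter, Finset.mem_univ, true_and]
                constructor
                · simpa using hb.1
                · rw [hadj']
                  have : (⟨(b : ℕ), hbm⟩ : Fin m).castSucc = b := by
                    apply Fin.ext; simp
                  rw [this]; exact hb.2
              · apply Fin.ext; simp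
          · intro a ha b hb hab
            rw [hadj']
            have hmem : ∀ c : Fin m, c ∈ insert j {i : Fin m | (i:ℕ) < (j:ℕ) ∧ G'.Adj i j} →
                c.castSucc ∈ insert j.castSucc
                  {i : Fin (m+1) | (i:ℕ) < (j.castSucc:ℕ) ∧ G.Adj i j.castSucc} := by
              intro c hc
              rcases hc with hc | hc
              · left; rw [hc]
              · right
                exact ⟨by simpa using hc.1, by rw [← hadj']; exact hc.2⟩
            exact hcl (hmem a ha) (hmem b hb) (fun e => hab (Fin.castSucc_injective m e))
      -- the neighborhood of the last vertex
      have hLk : k ≤ (L : ℕ) := by rw [hLval]; exact hkm'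
      obtain ⟨hNcard, hNclique⟩ := hbig L hLk
      set N : Finset (Fin (m+1)) :=
        Finset.univ.filter (fun i : Fin (m+1) => (i : ℕ) < (L : ℕ) ∧ G.Adj i L) with hNdef
      have hLnotN : L ∉ N := by
        intro hL
        rw [hNdef, Finset.mem_filter] at hL
        omega
      have hNadjL : ∀ a ∈ N, G.Adj a L := by
        intro a ha
        rw [hNdef, Finset.mem_filter] at ha
        exact ha.2.2
      have hNadj : ∀ a ∈ N, ∀ b ∈ N, a ≠ b → G.Adj a b := by
        intro a ha b hb hab
        rw [hNdef, Finset.mem_filter] at ha hb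
        exact hNclique (Or.inr ⟨ha.2.1, ha.2.2⟩) (Or.inr ⟨hb.2.1, hb.2.2⟩) hab
      have hmemN : ∀ a : Fin (m+1), G.Adj a L → a ∈ N := by
        intro a haL
        rw [hNdef, Finset.mem_filter]
        refine ⟨Finset.mem_univ _, ?_, haL⟩
        have : a ≠ L := G.ne_of_adj haL
        have : (a : ℕ) ≠ m := fun e => this (Fin.ext e)
        omega
      -- split triangles by membership of L
      have hsplit : (G.cliqueFinset 3).card =
          ((G.cliqueFinset 3).filter (fun s => L ∈ s)).card +
          ((G.cliqueFinset 3).filter (fun s => L ∉ s)).card :=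
        (Finset.card_filter_add_card_filter_not (fun s => L ∈ s)).symm
      -- triangles containing L
      have key1 : ((G.cliqueFinset 3).filter (fun s => L ∈ s)).card = (k-1).choose 2 := by
        rw [← hNcard, ← Finset.card_powersetCard]
        symm
        apply Finset.card_bij (fun (p : Finset (Fin (m+1))) _ => insert L p)
        · intro p hp
          rw [Finset.mem_powersetCard] at hp
          have hLp : L ∉ p := fun hL => hLnotN (hp.1 hL)
          rw [Finset.mem_filter, SimpleGraph.mem_cliqueFinset_iff]
          refine ⟨⟨?_, ?_⟩, Finset.mem_insert_self _ _⟩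
          · intro a ha b hb hab
            rw [Finset.coe_insert, Set.mem_insert_iff] at ha hb
            rcases ha with ha | ha <;> rcases hb with hb | hb
            · exact absurd (ha.trans hb.symm) hab
            · subst ha
              exact (hNadjL b (hp.1 hb)).symm
            · subst hb
              exact hNadjL a (hp.1 ha)
            · exact hNadj a (hp.1 ha) b (hp.1 hb) hab
          · rw [Finset.card_insert_of_notMem hLp, hp.2]
        · intro p hp q hq e
          rw [Finset.mem_powersetCard] at hp hq
          have hLp : L ∉ p := fun hL => hLnotN (hp.1 hL)
          have hLq : L ∉ q := fun hL => hLnotN (hq.1 hL)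
          rw [← Finset.erase_insert hLp, ← Finset.erase_insert hLq, e]
        · intro s hs
          rw [Finset.mem_filter, SimpleGraph.mem_cliqueFinset_iff] at hs
          obtain ⟨⟨hscl, hscard⟩, hLs⟩ := hs
          refine ⟨s.erase L, ?_, Finset.insert_erase hLs⟩
          rw [Finset.mem_powersetCard]
          constructor
          · intro a ha
            rw [Finset.mem_erase] at ha
            exact hmemN a (hscl (Finset.mem_coe.mpr ha.2) (Finset.mem_coe.mpr hLs) ha.1)
          · rw [Finset.card_erase_of_mem hLs, hscard]
      -- triangles not containing L
      have key2 : ((G.cliqueFinset 3).filter (fun s => L ∉ s)).card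
          = (G'.cliqueFinset 3).card := by
        classical
        symm
        have cinj : Function.Injective (Fin.castSucc : Fin m → Fin (m+1)) :=
          Fin.castSucc_injective m
        apply Finset.card_bij
          (fun (t : Finset (Fin m)) _ => t.map ⟨Fin.castSucc, cinj⟩)
        · intro t ht
          rw [SimpleGraph.mem_cliqueFinset_iff] at ht
          rw [Finset.mem_filter, SimpleGraph.mem_cliqueFinset_iff]
          refine ⟨⟨?_, ?_⟩, ?_⟩
          · intro a ha b hb hab
            rw [Finset.coe_map] at ha hb
            obtain ⟨a', ha', rfl⟩ := ha
            obtain ⟨b', hb', rfl⟩ := hb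
            simp only [Function.Embedding.coeFn_mk] at hab ⊢
            rw [← hadj']
            exact ht.1 ha' hb' (fun e => hab (congrArg _ e))
          · rw [Finset.card_map, ht.2]
          · intro hL
            rw [Finset.mem_map] at hL
            obtain ⟨a, _, ha⟩ := hL
            have : (a.castSucc : ℕ) = m := by rw [show a.castSucc = L from ha, hLval]
            have : (a : ℕ) = m := by simpa using this
            omega
        · intro t ht u hu e
          exact Finset.map_injective _ e
        · intro s hs
          rw [Finset.mem_filter, SimpleGraph.mem_cliqueFinset_iff] at hs
          obtain ⟨⟨hscl, hscard⟩, hLs⟩ := hs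
          have hrange : ∀ x ∈ s, x ∈ Set.range (Fin.castSucc : Fin m → Fin (m+1)) := by
            intro x hx
            have hxm : (x : ℕ) < m := by
              have : x ≠ L := fun e => hLs (e ▸ hx)
              have : (x : ℕ) ≠ m := fun e => this (Fin.ext e)
              omega
            exact ⟨⟨(x : ℕ), hxm⟩, Fin.ext (by simp)⟩
          set t : Finset (Fin m) := s.preimage Fin.castSucc (cinj.injOn) with htdef
          have himg : t.map ⟨Fin.castSucc, cinj⟩ = s := by
            rw [Finset.map_eq_image]
            simp only [Function.Embedding.coeFn_mk]
            rw [htdef, Finset.image_preimage]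
            apply Finset.filter_true_of_mem
            intro x hx
            exact hrange x hx
          have htcard : t.card = 3 := by
            have := Finset.card_map (f := (⟨Fin.castSucc, cinj⟩ : Fin m ↪ Fin (m+1))) (s := t)
            rw [himg, hscard] at this
            omega
          refine ⟨t, ?_, himg⟩
          rw [SimpleGraph.mem_cliqueFinset_iff]
          refine ⟨?_, htcard⟩
          intro a ha b hb hab
          rw [Finset.mem_coe, htdef, Finset.mem_preimage] at ha hb
          rw [hadj']
          exact hscl (Finset.mem_coe.mpr ha) (Finset.mem_coe.mpr hb) (fun e => hab (cinj e))
      -- put it together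
      rw [hsplit, key1, key2, ih G' hG', Nat.choose_two_right,
        show k - 1 - 1 = k - 2 from by omega, arith_step' k m hkm']
      omega

theorem km1tree_triangle_count (k n : ℕ) (G : SimpleGraph (Fin n)) [DecidableRel G.Adj]
    (h : IsKm1Tree k n G) :
    (G.cliqueFinset 3).card = (3 * n - 2 * k) * (k - 1) * (k - 2) / 6 :=
  aux_main k n G h
end

section
/- For a (k-1)-tree G with n vertices, the matrix S(G) defined by S(G)_{ii} = (|N(i)| - (k-2))/(k(k-1)(n-k+1)), S(G)_{ij} = (|N(i) ∩ N(j)| - (k-3))/(k(k-1)(n-k+1)) for edges (i,j), and S(G)_{ij} = 0 for non-adjacent i ≠ j, is positive semidefinite. -/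
namespace Km1Aux

open Finset Matrix

variable {n : ℕ} (k : ℕ) (G : SimpleGraph (Fin n)) [DecidableRel G.Adj]

/-- Earlier neighbors of `j`. -/
def Q (j : Fin n) : Finset (Fin n) :=
  Finset.univ.filter (fun i : Fin n => (i : ℕ) < (j : ℕ) ∧ G.Adj i j)

/-- The `k`-clique associated to index `m`. -/
def fcl (m : Fin n) : Finset (Fin n) :=
  if (m : ℕ) < k then Finset.univ.filter (fun i : Fin n => (i : ℕ) < k)
  else insert m (Q G m)

/-- Index set of cliques. -/
def T : Finset (Fin n) := Finset.univ.filter (fun m : Fin n => k - 1 ≤ (m : ℕ))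

lemma mem_Q {i j : Fin n} : i ∈ Q G j ↔ (i : ℕ) < (j : ℕ) ∧ G.Adj i j := by
  simp [Q]

lemma card_seg (hkn : k ≤ n) :
    (Finset.univ.filter (fun v : Fin n => (v : ℕ) < k)).card = k := by
  have : (Finset.univ.filter (fun v : Fin n => (v : ℕ) < k)) =
      Finset.map (Fin.castLEEmb hkn) Finset.univ := by
    ext v
    simp only [mem_filter, mem_univ, true_and, Finset.mem_map]
    constructor
    · intro hv
      exact ⟨⟨v, hv⟩, rfl⟩
    · rintro ⟨w, -, rfl⟩
      exact w.isLt
  rw [this, Finset.card_map, Finset.card_univ, Fintype.card_fin]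

lemma fcl_adj (h : IsKm1Tree k n G) {m a b : Fin n}
    (ha : a ∈ fcl k G m) (hb : b ∈ fcl k G m) (hab : a ≠ b) : G.Adj a b := by
  obtain ⟨hkn, h2, h3⟩ := h
  by_cases hm : (m : ℕ) < k
  · simp only [fcl, if_pos hm, mem_filter, mem_univ, true_and] at ha hb
    exact h2 a b ha hb hab
  · push_neg at hm
    have hcl := (h3 m hm).2
    simp only [fcl, if_neg (not_lt.mpr hm)] at ha hb
    have ha' : a ∈ insert m {i : Fin n | (i : ℕ) < (m : ℕ) ∧ G.Adj i m} := by
      rcases Finset.mem_insert.mp ha with rfl | hq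
      · exact Set.mem_insert _ _
      · exact Set.mem_insert_of_mem _ ((mem_Q G).mp hq)
    have hb' : b ∈ insert m {i : Fin n | (i : ℕ) < (m : ℕ) ∧ G.Adj i m} := by
      rcases Finset.mem_insert.mp hb with rfl | hq
      · exact Set.mem_insert _ _
      · exact Set.mem_insert_of_mem _ ((mem_Q G).mp hq)
    exact hcl ha' hb' hab

/-- The "later common clique" set for diagonal counting. -/
def S (i : Fin n) : Finset (Fin n) :=
  Finset.univ.filter (fun v : Fin n => k ≤ (v : ℕ) ∧ (i : ℕ) < (v : ℕ) ∧ G.Adj i v)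

lemma deg_eq (h : IsKm1Tree k n G) (hk2 : 2 ≤ k) (i : Fin n) :
    (G.neighborFinset i).card = (S k G i).card + (k - 1) := by
  obtain ⟨hkn, h2, h3⟩ := h
  have hsplit := Finset.card_filter_add_card_filter_not
    (s := G.neighborFinset i) (p := fun v : Fin n => k ≤ (v : ℕ) ∧ (i : ℕ) < (v : ℕ))
  rw [← hsplit]
  congr 1
  · -- filter p = S i
    congr 1
    ext v
    simp only [mem_filter, SimpleGraph.mem_neighborFinset, S, mem_univ, true_and]
    tauto
  · -- remainder has card k - 1
    by_cases hik : k ≤ (i : ℕ)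
    · have heq : (G.neighborFinset i).filter
          (fun v : Fin n => ¬(k ≤ (v : ℕ) ∧ (i : ℕ) < (v : ℕ))) = Q G i := by
        ext v
        simp only [mem_filter, SimpleGraph.mem_neighborFinset, mem_Q, not_and, not_lt]
        constructor
        · rintro ⟨hadj, hv⟩
          have hvi : (v : ℕ) ≠ (i : ℕ) := fun hh => G.ne_of_adj hadj (Fin.ext hh.symm)
          refine ⟨?_, hadj.symm⟩
          rcases lt_or_ge (v : ℕ) k with h1 | h1
          · omega
          · have := hv h1; omega
        · rintro ⟨hvi, hadj⟩
          exact ⟨hadj.symm, fun _ => by omega⟩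
      rw [heq]
      exact (h3 i hik).1
    · push_neg at hik
      have heq : (G.neighborFinset i).filter
          (fun v : Fin n => ¬(k ≤ (v : ℕ) ∧ (i : ℕ) < (v : ℕ))) =
          (Finset.univ.filter (fun v : Fin n => (v : ℕ) < k)).erase i := by
        ext v
        simp only [mem_filter, SimpleGraph.mem_neighborFinset, Finset.mem_erase, mem_univ,
          true_and, not_and, not_lt]
        constructor
        · rintro ⟨hadj, hv⟩
          have hvi : v ≠ i := fun hh => G.ne_of_adj hadj hh.symm
          refine ⟨hvi, ?_⟩
          rcases lt_or_ge (v : ℕ) k with h1 | h1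
          · exact h1
          · have h4 := hv h1
            have h5 : (v : ℕ) ≠ (i : ℕ) := fun hh => hvi (Fin.ext hh)
            omega
        · rintro ⟨hvi, hvk⟩
          exact ⟨(h2 i v hik hvk (Ne.symm hvi)), fun _ => by omega⟩
      rw [heq, Finset.card_erase_of_mem, card_seg k hkn]
      simp [hik]

lemma card_diag (h : IsKm1Tree k n G) (hk2 : 2 ≤ k) (i : Fin n) :
    ((T k).filter (fun m => i ∈ fcl k G m)).card = (S k G i).card + 1 := by
  obtain ⟨hkn, h2, h3⟩ := h
  have hkn' : k - 1 < n := by omega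
  have hval : ((⟨k - 1, hkn'⟩ : Fin n) : ℕ) = k - 1 := rfl
  by_cases hik : (i : ℕ) < k
  · have heq : (T k).filter (fun m => i ∈ fcl k G m) =
        insert (⟨k - 1, hkn'⟩ : Fin n) (S k G i) := by
      ext m
      simp only [T, mem_filter, mem_univ, true_and, Finset.mem_insert, S]
      constructor
      · rintro ⟨hm1, hm2⟩
        by_cases hmk : (m : ℕ) < k
        · left
          apply Fin.ext
          rw [hval]
          omega
        · right
          push_neg at hmk
          rw [fcl, if_neg (not_lt.mpr hmk)] at hm2
          rcases Finset.mem_insert.mp hm2 with rfl | hq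
          · omega
          · rw [mem_Q] at hq
            exact ⟨hmk, hq.1, hq.2⟩
      · rintro (rfl | ⟨hm1, hm2, hm3⟩)
        · refine ⟨by rw [hval], ?_⟩
          rw [fcl, if_pos (by rw [hval]; omega)]
          simp [hik]
        · refine ⟨by omega, ?_⟩
          rw [fcl, if_neg (not_lt.mpr hm1)]
          exact Finset.mem_insert_of_mem ((mem_Q G).mpr ⟨hm2, hm3⟩)
    have hnot : (⟨k - 1, hkn'⟩ : Fin n) ∉ S k G i := by
      simp only [S, mem_filter, mem_univ, true_and, hval]
      rintro ⟨hc, -⟩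
      omega
    rw [heq, Finset.card_insert_of_notMem hnot]
  · push_neg at hik
    have heq : (T k).filter (fun m => i ∈ fcl k G m) = insert i (S k G i) := by
      ext m
      simp only [T, mem_filter, mem_univ, true_and, Finset.mem_insert, S]
      constructor
      · rintro ⟨hm1, hm2⟩
        by_cases hmk : (m : ℕ) < k
        · rw [fcl, if_pos hmk] at hm2
          simp only [mem_filter, mem_univ, true_and] at hm2
          omega
        · push_neg at hmk
          rw [fcl, if_neg (not_lt.mpr hmk)] at hm2
          rcases Finset.mem_insert.mp hm2 with rfl | hq
          · left; rfl
          · right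
            rw [mem_Q] at hq
            exact ⟨hmk, hq.1, hq.2⟩
      · rintro (rfl | ⟨hm1, hm2, hm3⟩)
        · refine ⟨by omega, ?_⟩
          rw [fcl, if_neg (not_lt.mpr hik)]
          exact Finset.mem_insert_self _ _
        · refine ⟨by omega, ?_⟩
          rw [fcl, if_neg (not_lt.mpr hm1)]
          exact Finset.mem_insert_of_mem ((mem_Q G).mpr ⟨hm2, hm3⟩)
    have hnot : i ∉ S k G i := by
      simp only [S, mem_filter, mem_univ, true_and]
      rintro ⟨-, hc, -⟩
      omega
    rw [heq, Finset.card_insert_of_notMem hnot]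

/-- Common later neighbors of `i` and `j`. -/
def C2 (i j : Fin n) : Finset (Fin n) :=
  Finset.univ.filter (fun v : Fin n => (j : ℕ) < (v : ℕ) ∧ G.Adj i v ∧ G.Adj j v)

/-- Common neighbors `≥ k` of `i` and `j`. -/
def D2 (i j : Fin n) : Finset (Fin n) :=
  Finset.univ.filter (fun v : Fin n => k ≤ (v : ℕ) ∧ G.Adj i v ∧ G.Adj j v)

lemma pair_count (h : IsKm1Tree k n G) (hk2 : 2 ≤ k) {i j : Fin n}
    (hij : (i : ℕ) < (j : ℕ)) (hadj : G.Adj i j) :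
    (G.neighborFinset i ∩ G.neighborFinset j).card + 3 =
      k + ((T k).filter (fun m => i ∈ fcl k G m ∧ j ∈ fcl k G m)).card := by
  obtain ⟨hkn, h2, h3⟩ := h
  have hkn' : k - 1 < n := by omega
  have hval : ((⟨k - 1, hkn'⟩ : Fin n) : ℕ) = k - 1 := rfl
  by_cases hjk : k ≤ (j : ℕ)
  · -- case j ≥ k
    -- the common-neighbor set
    have hsplit := Finset.card_filter_add_card_filter_not
      (s := G.neighborFinset i ∩ G.neighborFinset j)
      (p := fun v : Fin n => (v : ℕ) < (j : ℕ))
    have h1 : (G.neighborFinset i ∩ G.neighborFinset j).filter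
        (fun v : Fin n => (v : ℕ) < (j : ℕ)) = (Q G j).erase i := by
      ext v
      simp only [mem_filter, Finset.mem_inter, SimpleGraph.mem_neighborFinset,
        Finset.mem_erase, mem_Q]
      constructor
      · rintro ⟨⟨hvi, hvj⟩, hv⟩
        exact ⟨G.ne_of_adj hvi.symm, hv, hvj.symm⟩
      · rintro ⟨hne, hv, hvj⟩
        refine ⟨⟨?_, hvj.symm⟩, hv⟩
        have hiQ : i ∈ Q G j := (mem_Q G).mpr ⟨hij, hadj⟩
        have hvQ : v ∈ Q G j := (mem_Q G).mpr ⟨hv, hvj⟩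
        have : G.Adj i v := by
          apply fcl_adj k G ⟨hkn, h2, h3⟩ (m := j)
          · rw [fcl, if_neg (not_lt.mpr hjk)]
            exact Finset.mem_insert_of_mem hiQ
          · rw [fcl, if_neg (not_lt.mpr hjk)]
            exact Finset.mem_insert_of_mem hvQ
          · exact fun hh => hne (hh.symm)
        exact this
    have h2' : (G.neighborFinset i ∩ G.neighborFinset j).filter
        (fun v : Fin n => ¬(v : ℕ) < (j : ℕ)) = C2 G i j := by
      ext v
      simp only [mem_filter, Finset.mem_inter, SimpleGraph.mem_neighborFinset, C2,
        mem_univ, true_and, not_lt]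
      constructor
      · rintro ⟨⟨hvi, hvj⟩, hv⟩
        have : (v : ℕ) ≠ (j : ℕ) := fun hh => G.ne_of_adj hvj (Fin.ext hh.symm)
        exact ⟨by omega, hvi, hvj⟩
      · rintro ⟨hv, hvi, hvj⟩
        exact ⟨⟨hvi, hvj⟩, by omega⟩
    have hiQ : i ∈ Q G j := (mem_Q G).mpr ⟨hij, hadj⟩
    have hWcard : (G.neighborFinset i ∩ G.neighborFinset j).card =
        (k - 2) + (C2 G i j).card := by
      have hQc : (Q G j).card = k - 1 := (h3 j hjk).1
      rw [← hsplit, h1, h2', Finset.card_erase_of_mem hiQ, hQc]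
      omega
    -- the clique count
    have hA : (T k).filter (fun m => i ∈ fcl k G m ∧ j ∈ fcl k G m) =
        insert j (C2 G i j) := by
      ext m
      simp only [T, mem_filter, mem_univ, true_and, Finset.mem_insert, C2]
      constructor
      · rintro ⟨hm1, hmi, hmj⟩
        by_cases hmk : (m : ℕ) < k
        · rw [fcl, if_pos hmk] at hmj
          simp only [mem_filter, mem_univ, true_and] at hmj
          omega
        · push_neg at hmk
          rw [fcl, if_neg (not_lt.mpr hmk)] at hmi hmj
          rcases Finset.mem_insert.mp hmj with rfl | hq
          · left; rfl
          · right
            rw [mem_Q] at hq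
            rcases Finset.mem_insert.mp hmi with rfl | hq'
            · omega
            · rw [mem_Q] at hq'
              exact ⟨hq.1, hq'.2, hq.2⟩
      · rintro (rfl | ⟨hm1, hm2, hm3⟩)
        · refine ⟨by omega, ?_, ?_⟩
          · rw [fcl, if_neg (not_lt.mpr hjk)]
            exact Finset.mem_insert_of_mem hiQ
          · rw [fcl, if_neg (not_lt.mpr hjk)]
            exact Finset.mem_insert_self _ _
        · have hmk : k ≤ (m : ℕ) := by omega
          refine ⟨by omega, ?_, ?_⟩
          · rw [fcl, if_neg (not_lt.mpr hmk)]
            exact Finset.mem_insert_of_mem ((mem_Q G).mpr ⟨by omega, hm2⟩)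
          · rw [fcl, if_neg (not_lt.mpr hmk)]
            exact Finset.mem_insert_of_mem ((mem_Q G).mpr ⟨hm1, hm3⟩)
    have hnot : j ∉ C2 G i j := by
      simp only [C2, mem_filter, mem_univ, true_and]
      rintro ⟨hc, -⟩
      omega
    rw [hWcard, hA, Finset.card_insert_of_notMem hnot]
    omega
  · -- case j < k (hence i < k)
    push_neg at hjk
    have hik : (i : ℕ) < k := by omega
    have hine : i ≠ j := fun hh => by rw [hh] at hij; omega
    have hsplit := Finset.card_filter_add_card_filter_not
      (s := G.neighborFinset i ∩ G.neighborFinset j)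
      (p := fun v : Fin n => (v : ℕ) < k)
    have h1 : (G.neighborFinset i ∩ G.neighborFinset j).filter
        (fun v : Fin n => (v : ℕ) < k) =
        ((Finset.univ.filter (fun v : Fin n => (v : ℕ) < k)).erase i).erase j := by
      ext v
      simp only [mem_filter, Finset.mem_inter, SimpleGraph.mem_neighborFinset,
        Finset.mem_erase, mem_univ, true_and]
      constructor
      · rintro ⟨⟨hvi, hvj⟩, hv⟩
        exact ⟨G.ne_of_adj hvj.symm, G.ne_of_adj hvi.symm, hv⟩
      · rintro ⟨hvj, hvi, hv⟩
        exact ⟨⟨h2 i v hik hv (Ne.symm hvi), h2 j v hjk hv (Ne.symm hvj)⟩, hv⟩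
    have h2' : (G.neighborFinset i ∩ G.neighborFinset j).filter
        (fun v : Fin n => ¬(v : ℕ) < k) = D2 k G i j := by
      ext v
      simp only [mem_filter, Finset.mem_inter, SimpleGraph.mem_neighborFinset, D2,
        mem_univ, true_and, not_lt]
      tauto
    have hWcard : (G.neighborFinset i ∩ G.neighborFinset j).card =
        (k - 2) + (D2 k G i j).card := by
      rw [← hsplit, h1, h2']
      have hjmem : j ∈ (Finset.univ.filter (fun v : Fin n => (v : ℕ) < k)).erase i := by
        simp only [Finset.mem_erase, mem_filter, mem_univ, true_and]
        exact ⟨Ne.symm hine, hjk⟩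
      have himem : i ∈ Finset.univ.filter (fun v : Fin n => (v : ℕ) < k) := by
        simp only [mem_filter, mem_univ, true_and]; exact hik
      rw [Finset.card_erase_of_mem hjmem, Finset.card_erase_of_mem himem, card_seg k hkn]
      omega
    have hA : (T k).filter (fun m => i ∈ fcl k G m ∧ j ∈ fcl k G m) =
        insert (⟨k - 1, hkn'⟩ : Fin n) (D2 k G i j) := by
      ext m
      simp only [T, mem_filter, mem_univ, true_and, Finset.mem_insert, D2]
      constructor
      · rintro ⟨hm1, hmi, hmj⟩
        by_cases hmk : (m : ℕ) < k
        · left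
          apply Fin.ext
          rw [hval]
          omega
        · push_neg at hmk
          right
          rw [fcl, if_neg (not_lt.mpr hmk)] at hmi hmj
          have hi' : G.Adj i m := by
            rcases Finset.mem_insert.mp hmi with rfl | hq
            · omega
            · exact ((mem_Q G).mp hq).2
          have hj' : G.Adj j m := by
            rcases Finset.mem_insert.mp hmj with rfl | hq
            · omega
            · exact ((mem_Q G).mp hq).2
          exact ⟨hmk, hi', hj'⟩
      · rintro (rfl | ⟨hm1, hm2, hm3⟩)
        · refine ⟨by rw [hval], ?_, ?_⟩ <;>
            · rw [fcl, if_pos (by rw [hval]; omega)]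
              simp only [mem_filter, mem_univ, true_and]
              omega
        · refine ⟨by omega, ?_, ?_⟩
          · rw [fcl, if_neg (not_lt.mpr hm1)]
            exact Finset.mem_insert_of_mem ((mem_Q G).mpr ⟨by omega, hm2⟩)
          · rw [fcl, if_neg (not_lt.mpr hm1)]
            exact Finset.mem_insert_of_mem ((mem_Q G).mpr ⟨by omega, hm3⟩)
    have hnot : (⟨k - 1, hkn'⟩ : Fin n) ∉ D2 k G i j := by
      simp only [D2, mem_filter, mem_univ, true_and, hval]
      rintro ⟨hc, -⟩
      omega
    rw [hWcard, hA, Finset.card_insert_of_notMem hnot]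
    omega

lemma nonadj_count (h : IsKm1Tree k n G) {i j : Fin n} (hne : i ≠ j)
    (hnadj : ¬ G.Adj i j) :
    (T k).filter (fun m => i ∈ fcl k G m ∧ j ∈ fcl k G m) = ∅ := by
  rw [Finset.filter_eq_empty_iff]
  rintro m - ⟨hi, hj⟩
  exact hnadj (fcl_adj k G h hi hj hne)

lemma posSemidef_smul {N : Matrix (Fin n) (Fin n) ℝ} (hN : N.PosSemidef) {c : ℝ}
    (hc : 0 ≤ c) : (c • N).PosSemidef := by
  refine Matrix.PosSemidef.of_dotProduct_mulVec_nonneg ?_ fun x => ?_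
  · unfold Matrix.IsHermitian
    rw [Matrix.conjTranspose_smul, star_trivial, hN.1.eq]
  · rw [Matrix.smul_mulVec, dotProduct_smul, smul_eq_mul]
    exact mul_nonneg hc (hN.dotProduct_mulVec_nonneg x)

lemma posSemidef_vecMulVec (u : Fin n → ℝ) : (Matrix.vecMulVec u u).PosSemidef := by
  refine Matrix.PosSemidef.of_dotProduct_mulVec_nonneg ?_ fun x => ?_
  · ext i j
    simp [Matrix.vecMulVec_apply, Matrix.conjTranspose_apply, mul_comm]
  · have hmv : (Matrix.vecMulVec u u) *ᵥ x = (u ⬝ᵥ x) • u := by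
      ext i
      simp only [Matrix.mulVec, Matrix.vecMulVec_apply, dotProduct, Pi.smul_apply,
        smul_eq_mul]
      rw [Finset.sum_mul]
      exact Finset.sum_congr rfl fun v _ => by ring
    rw [hmv, star_trivial, dotProduct_smul, smul_eq_mul, dotProduct_comm]
    exact mul_self_nonneg _

lemma posSemidef_sum {s : Finset (Fin n)} {Ms : Fin n → Matrix (Fin n) (Fin n) ℝ}
    (hM : ∀ m ∈ s, (Ms m).PosSemidef) : (∑ m ∈ s, Ms m).PosSemidef := by
  classical
  induction s using Finset.induction_on with
  | empty => simpa using Matrix.PosSemidef.zero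
  | insert _ _ hnot ih =>
    rename_i a t
    rw [Finset.sum_insert hnot]
    exact (hM a (Finset.mem_insert_self _ _)).add
      (ih fun m hm => hM m (Finset.mem_insert_of_mem hm))

end Km1Aux

theorem km1tree_dual_matrix_posSemidef (k n : ℕ) (G : SimpleGraph (Fin n))
    [DecidableRel G.Adj] (h : IsKm1Tree k n G) :
    (Matrix.of fun i j : Fin n =>
      if i = j then
        (((G.neighborFinset i).card : ℝ) - ((k : ℝ) - 2)) /
          ((k : ℝ) * ((k : ℝ) - 1) * ((n : ℝ) - (k : ℝ) + 1))
      else if G.Adj i j then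
        (((G.neighborFinset i ∩ G.neighborFinset j).card : ℝ) - ((k : ℝ) - 3)) /
          ((k : ℝ) * ((k : ℝ) - 1) * ((n : ℝ) - (k : ℝ) + 1))
      else 0).PosSemidef := by
  classical
  open Km1Aux in
  by_cases hk2 : 2 ≤ k
  · have hkn : k ≤ n := h.1
    set D : ℝ := (k : ℝ) * ((k : ℝ) - 1) * ((n : ℝ) - (k : ℝ) + 1) with hD
    have hDpos : 0 < D := by
      have h1 : (2 : ℝ) ≤ (k : ℝ) := by exact_mod_cast hk2
      have h2 : (k : ℝ) ≤ (n : ℝ) := by exact_mod_cast hkn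
      exact mul_pos (mul_pos (by linarith) (by linarith)) (by linarith)
    set u : Fin n → Fin n → ℝ := fun m i => if i ∈ Km1Aux.fcl k G m then 1 else 0 with hu
    have hcount : ∀ i j : Fin n, ∑ m ∈ Km1Aux.T k, u m i * u m j =
        (((Km1Aux.T k).filter
          (fun m => i ∈ Km1Aux.fcl k G m ∧ j ∈ Km1Aux.fcl k G m)).card : ℝ) := by
      intro i j
      rw [Finset.card_filter]
      push_cast
      refine Finset.sum_congr rfl fun m _ => ?_
      by_cases h1 : i ∈ Km1Aux.fcl k G m <;> by_cases h2 : j ∈ Km1Aux.fcl k G m <;>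
        simp [hu, h1, h2]
    have key : (Matrix.of fun i j : Fin n =>
        if i = j then
          (((G.neighborFinset i).card : ℝ) - ((k : ℝ) - 2)) / D
        else if G.Adj i j then
          (((G.neighborFinset i ∩ G.neighborFinset j).card : ℝ) - ((k : ℝ) - 3)) / D
        else 0) =
        D⁻¹ • ∑ m ∈ Km1Aux.T k, Matrix.vecMulVec (u m) (u m) := by
      ext i j
      simp only [Matrix.of_apply, Matrix.smul_apply, Matrix.sum_apply,
        Matrix.vecMulVec_apply, smul_eq_mul]
      rw [hcount]
      split_ifs with he ha
      · subst he
        simp only [and_self]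
        have hnat : (G.neighborFinset i).card + 2 =
            ((Km1Aux.T k).filter (fun m => i ∈ Km1Aux.fcl k G m)).card + k := by
          rw [Km1Aux.deg_eq k G h hk2 i, Km1Aux.card_diag k G h hk2 i]
          omega
        have hcast : ((G.neighborFinset i).card : ℝ) + 2 =
            (((Km1Aux.T k).filter (fun m => i ∈ Km1Aux.fcl k G m)).card : ℝ) + k := by
          exact_mod_cast hnat
        rw [div_eq_inv_mul]
        congr 1
        linarith
      · have hvne : (i : ℕ) ≠ (j : ℕ) := fun hh => he (Fin.ext hh)
        rw [div_eq_inv_mul]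
        congr 1
        rcases lt_or_gt_of_ne hvne with hij | hij
        · have hnat := Km1Aux.pair_count k G h hk2 hij ha
          have hcast : ((G.neighborFinset i ∩ G.neighborFinset j).card : ℝ) + 3 =
              (k : ℝ) + (((Km1Aux.T k).filter
                (fun m => i ∈ Km1Aux.fcl k G m ∧ j ∈ Km1Aux.fcl k G m)).card : ℝ) := by
            exact_mod_cast hnat
          linarith
        · have hnat := Km1Aux.pair_count k G h hk2 hij ha.symm
          have hsymm : ((Km1Aux.T k).filter
              (fun m => j ∈ Km1Aux.fcl k G m ∧ i ∈ Km1Aux.fcl k G m)) =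
              ((Km1Aux.T k).filter
              (fun m => i ∈ Km1Aux.fcl k G m ∧ j ∈ Km1Aux.fcl k G m)) := by
            apply Finset.filter_congr
            intro m _
            exact and_comm
          rw [Finset.inter_comm] at hnat
          rw [hsymm] at hnat
          have hcast : ((G.neighborFinset i ∩ G.neighborFinset j).card : ℝ) + 3 =
              (k : ℝ) + (((Km1Aux.T k).filter
                (fun m => i ∈ Km1Aux.fcl k G m ∧ j ∈ Km1Aux.fcl k G m)).card : ℝ) := by
            exact_mod_cast hnat
          linarith
      · rw [Km1Aux.nonadj_count k G h he ha]
        simp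
    rw [key]
    exact Km1Aux.posSemidef_smul
      (Km1Aux.posSemidef_sum fun m _ => Km1Aux.posSemidef_vecMulVec (u m))
      (inv_nonneg.mpr hDpos.le)
  · push_neg at hk2
    have hD0 : (k : ℝ) * ((k : ℝ) - 1) * ((n : ℝ) - (k : ℝ) + 1) = 0 := by
      interval_cases k <;> norm_num
    have hzero : (Matrix.of fun i j : Fin n =>
        if i = j then
          (((G.neighborFinset i).card : ℝ) - ((k : ℝ) - 2)) /
            ((k : ℝ) * ((k : ℝ) - 1) * ((n : ℝ) - (k : ℝ) + 1))
        else if G.Adj i j then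
          (((G.neighborFinset i ∩ G.neighborFinset j).card : ℝ) - ((k : ℝ) - 3)) /
            ((k : ℝ) * ((k : ℝ) - 1) * ((n : ℝ) - (k : ℝ) + 1))
        else 0) = (0 : Matrix (Fin n) (Fin n) ℝ) := by
      ext i j
      simp only [Matrix.of_apply, Matrix.zero_apply]
      split_ifs <;> simp [hD0]
    rw [hzero]
    exact Matrix.PosSemidef.zero
end

section
/- For a (k-1)-tree G with n vertices, the matrix S'(G) with entries S'(G)_{ii} = |N(i)| - (k-2), S'(G)_{ij} = |N(i) ∩ N(j)| - (k-3) for edges (i,j), and 0 otherwise, satisfies: the sum of all off-diagonal entries equals k(k-1)(n-k+1). -/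
private lemma km1_aux (k : ℕ) :
    ∀ n, k ≤ n → ∀ (G : SimpleGraph (Fin n)) [inst : DecidableRel G.Adj],
    IsKm1Tree k n G →
    ∑ i : Fin n, ∑ j : Fin n,
        (if i = j then (0 : ℝ)
         else if G.Adj i j then
           ((G.neighborFinset i ∩ G.neighborFinset j).card : ℝ) - ((k : ℝ) - 3)
         else 0) =
      (k : ℝ) * ((k : ℝ) - 1) * ((n : ℝ) - (k : ℝ) + 1) := by
  refine Nat.le_induction ?_ ?_
  · -- base case n = k : complete graph
    intro G inst h
    obtain ⟨-, hcomp, -⟩ := h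
    have hadj : ∀ i j : Fin k, i ≠ j → G.Adj i j := fun i j hij =>
      hcomp i j i.isLt j.isLt hij
    have hN : ∀ i : Fin k, G.neighborFinset i = Finset.univ.erase i := by
      intro i
      ext x
      simp only [SimpleGraph.mem_neighborFinset, Finset.mem_erase, Finset.mem_univ, and_true]
      constructor
      · intro hx; exact fun e => G.irrefl (e ▸ hx)
      · intro hx; exact (hadj x i hx).symm
    have hent : ∀ i j : Fin k, i ≠ j →
        ((G.neighborFinset i ∩ G.neighborFinset j).card : ℝ) - ((k : ℝ) - 3) = 1 := by
      intro i j hij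
      have h2 : 2 ≤ k := by
        have h1 : 1 < Fintype.card (Fin k) := Fintype.one_lt_card_iff.mpr ⟨i, j, hij⟩
        simp only [Fintype.card_fin] at h1; omega
      have hinter : G.neighborFinset i ∩ G.neighborFinset j
          = (Finset.univ.erase i).erase j := by
        rw [hN, hN]
        ext x
        simp only [Finset.mem_inter, Finset.mem_erase, Finset.mem_univ, and_true]
        tauto
      have hmem : j ∈ (Finset.univ : Finset (Fin k)).erase i :=
        Finset.mem_erase.mpr ⟨hij.symm, Finset.mem_univ j⟩
      have hcard : (G.neighborFinset i ∩ G.neighborFinset j).card = k - 2 := by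
        rw [hinter, Finset.card_erase_of_mem hmem, Finset.card_erase_of_mem (Finset.mem_univ i)]
        simp only [Finset.card_univ, Fintype.card_fin]
        omega
      rw [hcard, Nat.cast_sub h2]
      push_cast
      ring
    have hrow : ∀ i : Fin k, (∑ j : Fin k, if i = j then (0 : ℝ) else 1) = (k : ℝ) - 1 := by
      intro i
      have e : ∀ j : Fin k, (if i = j then (0 : ℝ) else 1)
          = 1 - (if i = j then (1 : ℝ) else 0) := by
        intro j; by_cases hij : i = j <;> simp [hij]
      simp only [e, Finset.sum_sub_distrib, Finset.sum_const, Finset.sum_ite_eq,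
        Finset.mem_univ, if_pos, Finset.card_univ, Fintype.card_fin]
      simp
    calc ∑ i : Fin k, ∑ j : Fin k,
          (if i = j then (0 : ℝ)
           else if G.Adj i j then
             ((G.neighborFinset i ∩ G.neighborFinset j).card : ℝ) - ((k : ℝ) - 3)
           else 0)
        = ∑ i : Fin k, ∑ j : Fin k, (if i = j then (0 : ℝ) else 1) := by
          refine Finset.sum_congr rfl fun i _ => Finset.sum_congr rfl fun j _ => ?_
          by_cases hij : i = j
          · simp [hij]
          · rw [if_neg hij, if_neg hij, if_pos (hadj i j hij), hent i j hij]
      _ = (k : ℝ) * ((k : ℝ) - 1) * ((k : ℝ) - (k : ℝ) + 1) := by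
          simp only [hrow, Finset.sum_const, Finset.card_univ, Fintype.card_fin,
            nsmul_eq_mul]
          ring
  · -- inductive step
    intro m hm IH G inst h
    obtain ⟨-, hcomp, hatt⟩ := h
    set v : Fin (m + 1) := Fin.last m with hv
    have hvval : (v : ℕ) = m := rfl
    obtain ⟨hdeg, hclq⟩ := hatt v (by rw [hvval]; exact hm)
    set D : Finset (Fin (m + 1)) := G.neighborFinset v with hDdef
    have hmemD : ∀ x, x ∈ D ↔ G.Adj v x := fun x => by
      rw [hDdef]; exact SimpleGraph.mem_neighborFinset G v x
    have hlast_notmem : v ∉ D := fun hx => G.irrefl ((hmemD v).1 hx)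
    have hDeq : D = Finset.univ.filter (fun i : Fin (m + 1) => (i : ℕ) < (v : ℕ) ∧ G.Adj i v) := by
      ext x
      simp only [hmemD, Finset.mem_filter, Finset.mem_univ, true_and]
      constructor
      · intro hx
        have hne : x ≠ v := fun e => G.irrefl (e ▸ hx)
        exact ⟨Fin.val_lt_last hne, hx.symm⟩
      · exact fun hx => hx.2.symm
    have hDcard : D.card = k - 1 := by rw [hDeq]; exact hdeg
    have hDclique : ∀ x ∈ D, ∀ y ∈ D, x ≠ y → G.Adj x y := by
      intro x hx y hy hxy
      have hx' : x ∈ insert v {i : Fin (m + 1) | (i : ℕ) < (v : ℕ) ∧ G.Adj i v} := by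
        have := (hmemD x).1 hx
        exact Set.mem_insert_iff.mpr (Or.inr ⟨Fin.val_lt_last (fun e => G.irrefl (e ▸ this)),
          this.symm⟩)
      have hy' : y ∈ insert v {i : Fin (m + 1) | (i : ℕ) < (v : ℕ) ∧ G.Adj i v} := by
        have := (hmemD y).1 hy
        exact Set.mem_insert_iff.mpr (Or.inr ⟨Fin.val_lt_last (fun e => G.irrefl (e ▸ this)),
          this.symm⟩)
      exact hclq hx' hy' hxy
    have hAv : ∀ u ∈ D, G.neighborFinset v ∩ G.neighborFinset u = D.erase u := by
      intro u hu
      ext x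
      simp only [Finset.mem_inter, Finset.mem_erase, SimpleGraph.mem_neighborFinset, ← hDdef,
        hmemD]
      constructor
      · rintro ⟨h1, h2⟩
        exact ⟨fun e => G.irrefl (e ▸ h2), h1⟩
      · rintro ⟨hxu, hx⟩
        exact ⟨hx, hDclique u hu x ((hmemD x).mpr hx) (fun e => hxu (e.symm))⟩
    -- the restricted graph
    set G' : SimpleGraph (Fin m) := SimpleGraph.comap Fin.castSucc G with hG'
    haveI inst' : DecidableRel G'.Adj := fun a b => inst a.castSucc b.castSucc
    have hadj' : ∀ a b : Fin m, G'.Adj a b ↔ G.Adj a.castSucc b.castSucc := fun a b => Iff.rfl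
    -- cardinalities of preimages under castSucc
    have cardpre : ∀ (p : Fin (m + 1) → Prop) (_ : DecidablePred p),
        (∀ x, p x → x ≠ v) →
        (Finset.univ.filter (fun i : Fin m => p i.castSucc)).card
          = (Finset.univ.filter p).card := by
      intro p hdec hp
      refine Finset.card_bij (fun a _ => a.castSucc) ?_ ?_ ?_
      · intro a ha
        simp only [Finset.mem_filter, Finset.mem_univ, true_and] at ha ⊢
        exact ha
      · intro a _ b _ hab
        exact Fin.castSucc_injective _ hab
      · intro x hx
        have hpx : p x := (Finset.mem_filter.mp hx).2
        have hlt : (x : ℕ) < m := Fin.val_lt_last (hp x hpx)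
        refine ⟨⟨(x : ℕ), hlt⟩, ?_, ?_⟩
        · simp only [Finset.mem_filter, Finset.mem_univ, true_and]
          have : (⟨(x : ℕ), hlt⟩ : Fin m).castSucc = x := by
            apply Fin.ext; rfl
          rw [this]; exact hpx
        · apply Fin.ext; rfl
    have h' : IsKm1Tree k m G' := by
      refine ⟨hm, ?_, ?_⟩
      · intro i j hi hj hij
        exact hcomp i.castSucc j.castSucc (by simpa using hi) (by simpa using hj)
          (fun e => hij (Fin.castSucc_injective _ e))
      · intro j hj
        obtain ⟨hc, hq⟩ := hatt j.castSucc (by simpa using hj)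
        constructor
        · have hcalc : (Finset.univ.filter (fun i : Fin m => (i : ℕ) < (j : ℕ) ∧ G'.Adj i j))
              = (Finset.univ.filter (fun i : Fin m =>
                  ((i.castSucc : Fin (m+1)) : ℕ) < ((j.castSucc : Fin (m+1)) : ℕ)
                    ∧ G.Adj i.castSucc j.castSucc)) := by
            apply Finset.filter_congr
            intro i _
            simp [hadj']
          rw [hcalc]
          have hpre := cardpre
            (fun x => (x : ℕ) < ((j.castSucc : Fin (m+1)) : ℕ) ∧ G.Adj x j.castSucc)
            (by infer_instance)
            (fun x hx => by
              intro e
              have h1 : (x : ℕ) < m := lt_of_lt_of_le (by simpa using hx.1) (le_of_lt j.isLt)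
              rw [e] at h1
              exact absurd h1 (by simp [hvval]))
          exact hpre.trans hc
        · intro a ha b hb hab
          have conv : ∀ c : Fin m, c ∈ insert j {i : Fin m | (i : ℕ) < (j : ℕ) ∧ G'.Adj i j} →
              (c.castSucc : Fin (m+1)) ∈ insert (j.castSucc)
                {i : Fin (m+1) | (i : ℕ) < ((j.castSucc : Fin (m+1)) : ℕ) ∧ G.Adj i j.castSucc} := by
            intro c hc
            rcases Set.mem_insert_iff.mp hc with rfl | hmem
            · exact Set.mem_insert _ _
            · exact Set.mem_insert_iff.mpr (Or.inr ⟨by simpa using hmem.1, hmem.2⟩)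
          exact hq (conv a ha) (conv b hb) (fun e => hab (Fin.castSucc_injective _ e))
    -- the entry function
    set f : Fin (m + 1) → Fin (m + 1) → ℝ := fun i j =>
      if i = j then 0 else if G.Adj i j then
        ((G.neighborFinset i ∩ G.neighborFinset j).card : ℝ) - ((k : ℝ) - 3) else 0 with hf
    show (∑ i : Fin (m + 1), ∑ j : Fin (m + 1), f i j)
        = (k : ℝ) * ((k : ℝ) - 1) * (((m + 1 : ℕ) : ℝ) - (k : ℝ) + 1)
    have fsymm : ∀ a b, f a b = f b a := by
      intro a b
      by_cases hab : a = b
      · simp [hf, hab]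
      · simp only [hf, if_neg hab, if_neg (Ne.symm hab)]
        by_cases hadj : G.Adj a b
        · rw [if_pos hadj, if_pos hadj.symm, Finset.inter_comm]
        · rw [if_neg hadj, if_neg (fun h => hadj h.symm)]
    have hfvv : f v v = 0 := by simp [hf]
    have hfv : ∀ x, f v x = if x ∈ D then ((k - 1 - 1 : ℕ) : ℝ) - ((k : ℝ) - 3) else 0 := by
      intro x
      by_cases hx : x ∈ D
      · have hadjvx : G.Adj v x := (hmemD x).1 hx
        have hne : v ≠ x := fun e => G.irrefl (e ▸ hadjvx)
        simp only [hf, if_neg hne, if_pos hadjvx, if_pos hx]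
        rw [show G.neighborFinset v ∩ G.neighborFinset x = D.erase x from hAv x hx,
          Finset.card_erase_of_mem hx, hDcard]
      · have hnadj : ¬ G.Adj v x := fun hx' => hx ((hmemD x).mpr hx')
        by_cases hvx : v = x
        · simp [hf, hvx, hx]
        · simp [hf, hvx, hnadj, hx]
    -- intersection cardinality for castSucc pairs
    have cardInter : ∀ i j : Fin m, G.Adj i.castSucc j.castSucc →
        (G.neighborFinset i.castSucc ∩ G.neighborFinset j.castSucc).card
          = (G'.neighborFinset i ∩ G'.neighborFinset j).card
            + (if i.castSucc ∈ D ∧ j.castSucc ∈ D then 1 else 0) := by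
      intro i j _
      set T : Finset (Fin (m + 1)) := G.neighborFinset i.castSucc ∩ G.neighborFinset j.castSucc
        with hT
      have hmap : (G'.neighborFinset i ∩ G'.neighborFinset j).map Fin.castSuccEmb
          = T.erase v := by
        ext x
        simp only [Finset.mem_map, Finset.mem_inter, SimpleGraph.mem_neighborFinset,
          Finset.mem_erase, hT, Fin.coe_castSuccEmb]
        constructor
        · rintro ⟨y, ⟨hy1, hy2⟩, rfl⟩
          refine ⟨?_, hy1, hy2⟩
          intro e
          have : (y.castSucc : ℕ) = m := by rw [e]; rfl
          have h3 : (y : ℕ) = m := by simpa using this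
          have := y.isLt
          omega
        · rintro ⟨hxv, h1, h2⟩
          have hlt : (x : ℕ) < m := Fin.val_lt_last hxv
          refine ⟨⟨(x : ℕ), hlt⟩, ⟨?_, ?_⟩, ?_⟩
          · show G'.Adj i ⟨(x : ℕ), hlt⟩
            rw [hadj']
            have he : ((⟨(x : ℕ), hlt⟩ : Fin m).castSucc) = x := by apply Fin.ext; rfl
            rw [he]; exact h1
          · show G'.Adj j ⟨(x : ℕ), hlt⟩
            rw [hadj']
            have he : ((⟨(x : ℕ), hlt⟩ : Fin m).castSucc) = x := by apply Fin.ext; rfl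
            rw [he]; exact h2
          · apply Fin.ext; rfl
      have hvT : v ∈ T ↔ (i.castSucc ∈ D ∧ j.castSucc ∈ D) := by
        simp only [hT, Finset.mem_inter, SimpleGraph.mem_neighborFinset, hmemD]
        constructor
        · rintro ⟨h1, h2⟩; exact ⟨h1.symm, h2.symm⟩
        · rintro ⟨h1, h2⟩; exact ⟨h1.symm, h2.symm⟩
      have hcm : (G'.neighborFinset i ∩ G'.neighborFinset j).card = (T.erase v).card := by
        rw [← hmap, Finset.card_map]
      by_cases hvmem : v ∈ T
      · rw [if_pos (hvT.mp hvmem), hcm, Finset.card_erase_of_mem hvmem]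
        have : 1 ≤ T.card := Finset.card_pos.mpr ⟨v, hvmem⟩
        omega
      · rw [if_neg (fun hc => hvmem (hvT.mpr hc)), hcm, Finset.erase_eq_of_notMem hvmem]
        omega
    -- pointwise identity on the restricted block
    have key : ∀ i j : Fin m, f i.castSucc j.castSucc
        = (if i = j then (0 : ℝ) else if G'.Adj i j then
            ((G'.neighborFinset i ∩ G'.neighborFinset j).card : ℝ) - ((k : ℝ) - 3) else 0)
          + ((if i.castSucc ∈ D then (1 : ℝ) else 0) * (if j.castSucc ∈ D then (1 : ℝ) else 0)
             - (if i = j then (if i.castSucc ∈ D then (1 : ℝ) else 0) else 0)) := by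
      intro i j
      by_cases hij : i = j
      · subst hij
        by_cases hiD : i.castSucc ∈ D <;> simp [hf, hiD]
      · have hcij : i.castSucc ≠ j.castSucc := fun e => hij (Fin.castSucc_injective _ e)
        by_cases hadj : G.Adj i.castSucc j.castSucc
        · have hadjG' : G'.Adj i j := (hadj' i j).mpr hadj
          simp only [hf, if_neg hcij, if_pos hadj, if_neg hij, if_pos hadjG']
          rw [cardInter i j hadj]
          by_cases hiD : i.castSucc ∈ D <;> by_cases hjD : j.castSucc ∈ D <;>
            simp [hiD, hjD] <;> push_cast <;> ring
        · have hnadjG' : ¬ G'.Adj i j := fun hc => hadj ((hadj' i j).mp hc)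
          have hprod : (if i.castSucc ∈ D then (1 : ℝ) else 0)
              * (if j.castSucc ∈ D then (1 : ℝ) else 0) = 0 := by
            by_cases hiD : i.castSucc ∈ D
            · by_cases hjD : j.castSucc ∈ D
              · exact absurd (hDclique _ hiD _ hjD hcij) hadj
              · simp [hjD]
            · simp [hiD]
          simp only [hf, if_neg hcij, if_neg hadj, if_neg hij, if_neg hnadjG', hprod]
          ring
    -- count of castSucc-preimages of D
    have hcount : (Finset.univ.filter (fun a : Fin m => a.castSucc ∈ D)).card = k - 1 := by
      have hpre := cardpre (fun x => x ∈ D) (by infer_instance)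
        (fun x hx e => hlast_notmem (by rw [← e]; exact hx))
      rw [Finset.filter_univ_mem, hDcard] at hpre
      exact hpre
    have hχ : (∑ i : Fin m, if i.castSucc ∈ D then (1 : ℝ) else 0) = ((k - 1 : ℕ) : ℝ) := by
      rw [← Finset.sum_filter, Finset.sum_const, hcount]
      simp
    -- split the sum
    have hsplit : ∑ i : Fin (m + 1), ∑ j : Fin (m + 1), f i j
        = (∑ i : Fin m, ∑ j : Fin m, f i.castSucc j.castSucc)
          + (∑ x : Fin m, f x.castSucc v) + (∑ x : Fin m, f v x.castSucc) + f v v := by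
      have e1 : ∀ i : Fin m, (∑ j : Fin (m + 1), f i.castSucc j)
          = (∑ j : Fin m, f i.castSucc j.castSucc) + f i.castSucc v :=
        fun i => Fin.sum_univ_castSucc _
      rw [Fin.sum_univ_castSucc (f := fun i => ∑ j : Fin (m + 1), f i j),
        Fin.sum_univ_castSucc (f := fun j => f v j),
        Finset.sum_congr rfl (fun i _ => e1 i), Finset.sum_add_distrib]
      ring
    have hB : (∑ x : Fin m, f v x.castSucc)
        = ((k - 1 : ℕ) : ℝ) * (((k - 1 - 1 : ℕ) : ℝ) - ((k : ℝ) - 3)) := by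
      simp only [hfv]
      rw [← Finset.sum_filter, Finset.sum_const, hcount]
      simp [nsmul_eq_mul]
    have hB' : (∑ x : Fin m, f x.castSucc v)
        = ((k - 1 : ℕ) : ℝ) * (((k - 1 - 1 : ℕ) : ℝ) - ((k : ℝ) - 3)) := by
      rw [Finset.sum_congr rfl (fun x _ => fsymm x.castSucc v)]
      exact hB
    have hC : (∑ i : Fin m, ∑ j : Fin m,
        ((if i.castSucc ∈ D then (1 : ℝ) else 0) * (if j.castSucc ∈ D then (1 : ℝ) else 0)
          - (if i = j then (if i.castSucc ∈ D then (1 : ℝ) else 0) else 0)))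
        = ((k - 1 : ℕ) : ℝ) * ((k - 1 : ℕ) : ℝ) - ((k - 1 : ℕ) : ℝ) := by
      simp only [Finset.sum_sub_distrib]
      have t1 : (∑ i : Fin m, ∑ j : Fin m,
          (if i.castSucc ∈ D then (1 : ℝ) else 0) * (if j.castSucc ∈ D then (1 : ℝ) else 0))
          = ((k - 1 : ℕ) : ℝ) * ((k - 1 : ℕ) : ℝ) := by
        rw [← Finset.sum_mul_sum, hχ]
      have t2 : (∑ i : Fin m, ∑ j : Fin m,
          (if i = j then (if i.castSucc ∈ D then (1 : ℝ) else 0) else 0))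
          = ((k - 1 : ℕ) : ℝ) := by
        rw [← hχ]
        refine Finset.sum_congr rfl fun i _ => ?_
        rw [Finset.sum_ite_eq]
        simp
      rw [t1, t2]
    have hA : (∑ i : Fin m, ∑ j : Fin m, f i.castSucc j.castSucc)
        = (∑ i : Fin m, ∑ j : Fin m,
            (if i = j then (0 : ℝ) else if G'.Adj i j then
              ((G'.neighborFinset i ∩ G'.neighborFinset j).card : ℝ) - ((k : ℝ) - 3) else 0))
          + (((k - 1 : ℕ) : ℝ) * ((k - 1 : ℕ) : ℝ) - ((k - 1 : ℕ) : ℝ)) := by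
      rw [← hC, ← Finset.sum_add_distrib]
      refine Finset.sum_congr rfl fun i _ => ?_
      rw [← Finset.sum_add_distrib]
      exact Finset.sum_congr rfl fun j _ => key i j
    have hIH := IH G' h'
    rw [hsplit, hA, hIH, hB, hB', hfvv]
    -- final arithmetic
    rcases k with _ | _ | k
    · norm_num
    · norm_num
    · have e1 : ((k + 2 - 1 : ℕ) : ℝ) = (k : ℝ) + 1 := by norm_num
      have e2 : ((k + 2 - 1 - 1 : ℕ) : ℝ) = (k : ℝ) := by norm_num
      rw [e1, e2]
      push_cast
      ring

/-- The sum of the off-diagonal entries of the (unscaled) dual matrix `S'(G)` of a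
`(k-1)`-tree equals `k(k-1)(n-k+1)`. -/
theorem km1tree_offdiag_sum (k n : ℕ) (G : SimpleGraph (Fin n)) [DecidableRel G.Adj]
    (h : IsKm1Tree k n G) :
    ∑ i : Fin n, ∑ j : Fin n,
        (if i = j then (0 : ℝ)
         else if G.Adj i j then
           ((G.neighborFinset i ∩ G.neighborFinset j).card : ℝ) - ((k : ℝ) - 3)
         else 0) =
      (k : ℝ) * ((k : ℝ) - 1) * ((n : ℝ) - (k : ℝ) + 1) := by
  exact km1_aux k n h.1 G h
end

section
/- Let G be a graph on n vertices containing a k-clique K, and let c_1, c_2 be two proper k-colorings of G inducing different partitions of V into color classes, normalized so that c_1 and c_2 agree on K. Let C_1, C_2 be the corresponding matrices with (C_p)_{ij} = 1 if c_p(i) = c_p(j) and -1/(k-1) otherwise. Then for every α ∈ (0,1), the matrix αC_1 + (1-α)C_2 is positive semidefinite and has rank strictly greater than k-1. -/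
open Matrix

/-- The matrix associated to a coloring `c`, with entry `1` if the endpoints get the same
color and `-1/(k-1)` otherwise. -/
noncomputable def colorMatrix (n k : ℕ) (c : Fin n → Fin k) : Matrix (Fin n) (Fin n) ℝ :=
  Matrix.of fun i j => if c i = c j then 1 else -1 / ((k : ℝ) - 1)

noncomputable def classSum (n k : ℕ) (c : Fin n → Fin k) (x : Fin n → ℝ) (t : Fin k) : ℝ :=
  ∑ i, if c i = t then x i else 0

lemma sum_classSum (n k : ℕ) (c : Fin n → Fin k) (x : Fin n → ℝ) :
    ∑ t, classSum n k c x t = ∑ j, x j := by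
  unfold classSum
  rw [Finset.sum_comm]
  simp

lemma colorMatrix_mulVec (n k : ℕ) (hk : 2 ≤ k) (c : Fin n → Fin k) (x : Fin n → ℝ) (i : Fin n) :
    (colorMatrix n k c *ᵥ x) i
      = ((k : ℝ) * classSum n k c x (c i) - ∑ j, x j) / ((k : ℝ) - 1) := by
  have hk1 : (k : ℝ) - 1 ≠ 0 := by
    have : (2 : ℝ) ≤ (k : ℝ) := by exact_mod_cast hk
    linarith
  have : (colorMatrix n k c *ᵥ x) i
      = ∑ j, ((k : ℝ) / ((k : ℝ) - 1) * (if c j = c i then x j else 0)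
          - 1 / ((k : ℝ) - 1) * x j) := by
    simp only [Matrix.mulVec, dotProduct, colorMatrix, Matrix.of_apply]
    refine Finset.sum_congr rfl fun j _ => ?_
    by_cases h : c i = c j
    · rw [if_pos h, if_pos h.symm]
      field_simp
    · rw [if_neg h, if_neg (fun h' => h h'.symm)]
      field_simp
      ring
  rw [this, Finset.sum_sub_distrib, ← Finset.mul_sum, ← Finset.mul_sum]
  unfold classSum
  field_simp

lemma key_sum (n k : ℕ) (c : Fin n → Fin k) (x : Fin n → ℝ) :
    ∑ i, x i * classSum n k c x (c i) = ∑ t, (classSum n k c x t) ^ 2 := by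
  have h1 : ∀ i : Fin n, x i * classSum n k c x (c i)
      = ∑ t, if c i = t then x i * classSum n k c x t else 0 := by
    intro i
    rw [Finset.sum_ite_eq]
    simp
  simp only [h1]
  rw [Finset.sum_comm]
  refine Finset.sum_congr rfl fun t _ => ?_
  have h2 : (∑ i, if c i = t then x i * classSum n k c x t else 0)
      = (∑ i, (if c i = t then x i else 0)) * classSum n k c x t := by
    rw [Finset.sum_mul]
    exact Finset.sum_congr rfl fun i _ => by rw [ite_mul, zero_mul]
  rw [h2, sq, classSum]

lemma colorMatrix_quadform (n k : ℕ) (hk : 2 ≤ k) (c : Fin n → Fin k) (x : Fin n → ℝ) :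
    x ⬝ᵥ (colorMatrix n k c *ᵥ x)
      = ((k : ℝ) * ∑ t, (classSum n k c x t) ^ 2 - (∑ j, x j) ^ 2) / ((k : ℝ) - 1) := by
  have hk1 : (k : ℝ) - 1 ≠ 0 := by
    have : (2 : ℝ) ≤ (k : ℝ) := by exact_mod_cast hk
    linarith
  simp only [dotProduct]
  calc ∑ i, x i * (colorMatrix n k c *ᵥ x) i
      = ∑ i, (x i * ((k : ℝ) * classSum n k c x (c i)) - x i * ∑ j, x j) / ((k:ℝ)-1) := by
        refine Finset.sum_congr rfl fun i _ => ?_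
        rw [colorMatrix_mulVec n k hk c x i]
        field_simp
    _ = ((∑ i, x i * ((k : ℝ) * classSum n k c x (c i))) - (∑ i, x i * ∑ j, x j)) / ((k:ℝ)-1) := by
        rw [← Finset.sum_div, Finset.sum_sub_distrib]
    _ = ((k : ℝ) * ∑ t, (classSum n k c x t) ^ 2 - (∑ j, x j) ^ 2) / ((k : ℝ) - 1) := by
        rw [← Finset.sum_mul, sq]
        congr 2
        rw [← key_sum n k c x, Finset.mul_sum]
        refine Finset.sum_congr rfl fun i _ => ?_
        ring

lemma colorMatrix_posSemidef (n k : ℕ) (hk : 2 ≤ k) (c : Fin n → Fin k) :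
    (colorMatrix n k c).PosSemidef := by
  refine Matrix.PosSemidef.of_dotProduct_mulVec_nonneg ?_ ?_
  · ext i j
    simp only [colorMatrix, Matrix.conjTranspose_apply, Matrix.of_apply, star_trivial]
    by_cases h : c i = c j
    · rw [if_pos h, if_pos h.symm]
    · rw [if_neg h, if_neg (fun h' => h h'.symm)]
  · intro x
    have hx : star x = x := by simp
    rw [hx, colorMatrix_quadform n k hk c x]
    have hcard : ((Finset.univ : Finset (Fin k)).card : ℝ) = (k : ℝ) := by simp
    have hcs : (∑ t, classSum n k c x t) ^ 2 ≤ (k:ℝ) * ∑ t, (classSum n k c x t) ^ 2 := by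
      have := sq_sum_le_card_mul_sum_sq (s := (Finset.univ : Finset (Fin k)))
        (f := classSum n k c x)
      rw [hcard] at this
      exact this
    rw [sum_classSum n k c x] at hcs
    have hk1 : (0:ℝ) ≤ (k : ℝ) - 1 := by
      have : (2 : ℝ) ≤ (k : ℝ) := by exact_mod_cast hk
      linarith
    exact div_nonneg (by linarith) hk1

lemma rank_add_nullity (m : ℕ) (A : Matrix (Fin m) (Fin m) ℝ) :
    A.rank + Module.finrank ℝ (LinearMap.ker A.mulVecLin) = m := by
  rw [Matrix.rank, LinearMap.finrank_range_add_finrank_ker]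
  simp [Module.finrank_fintype_fun_eq_card]

lemma colorMatrix_id_rank (k : ℕ) (hk : 2 ≤ k) :
    k - 1 ≤ (colorMatrix k k id).rank := by
  have hker : LinearMap.ker (colorMatrix k k id).mulVecLin
      ≤ Submodule.span ℝ {(fun _ => 1 : Fin k → ℝ)} := by
    intro x hx
    have hx' : colorMatrix k k id *ᵥ x = 0 := hx
    have hk1 : (k : ℝ) - 1 ≠ 0 := by
      have : (2 : ℝ) ≤ (k : ℝ) := by exact_mod_cast hk
      linarith
    have hk0 : (k : ℝ) ≠ 0 := by positivity
    have hcs : ∀ t : Fin k, classSum k k id x t = x t := by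
      intro t
      unfold classSum
      simp
    have hcomp : ∀ i : Fin k, x i = (∑ j, x j) / (k : ℝ) := by
      intro i
      have := congrFun hx' i
      rw [colorMatrix_mulVec k k hk id x i, hcs] at this
      simp only [id] at this
      field_simp at this ⊢
      simp only [Pi.zero_apply, mul_zero] at this
      linarith [this]
    rw [Submodule.mem_span_singleton]
    exact ⟨(∑ j, x j) / (k : ℝ), by funext i; rw [Pi.smul_apply, smul_eq_mul, mul_one,
      ← hcomp i]⟩
  have hone : (fun _ => 1 : Fin k → ℝ) ≠ 0 := by
    intro h
    have := congrFun h ⟨0, by omega⟩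
    simp at this
  have hdim : Module.finrank ℝ (LinearMap.ker (colorMatrix k k id).mulVecLin) ≤ 1 := by
    calc Module.finrank ℝ (LinearMap.ker (colorMatrix k k id).mulVecLin)
        ≤ Module.finrank ℝ (Submodule.span ℝ {(fun _ => 1 : Fin k → ℝ)}) :=
          Submodule.finrank_mono hker
      _ = 1 := finrank_span_singleton hone
  have := rank_add_nullity k (colorMatrix k k id)
  omega

lemma colorMatrix_rank_ge (n k : ℕ) (hk : 2 ≤ k) (c : Fin n → Fin k) (emb : Fin k → Fin n)
    (hinj : Function.Injective (c ∘ emb)) : k - 1 ≤ (colorMatrix n k c).rank := by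
  have hbij : Function.Bijective (c ∘ emb) := Finite.injective_iff_bijective.mp hinj
  let σ : Fin k ≃ Fin k := Equiv.ofBijective _ hbij
  have hsub : (colorMatrix n k c).submatrix emb emb = (colorMatrix k k id).submatrix σ σ := by
    ext a b
    simp only [Matrix.submatrix_apply, colorMatrix, Matrix.of_apply, id]
    rfl
  let E : Matrix (Fin k) (Fin n) ℝ := Matrix.of fun a j => if emb a = j then 1 else 0
  have hE : E * colorMatrix n k c * Eᵀ = (colorMatrix n k c).submatrix emb emb := by
    have h1 : E * colorMatrix n k c = Matrix.of fun a j => colorMatrix n k c (emb a) j := by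
      ext a j
      simp only [Matrix.mul_apply, Matrix.of_apply, E, ite_mul, one_mul, zero_mul]
      rw [Finset.sum_ite_eq]
      simp
    rw [h1]
    ext a b
    simp only [Matrix.mul_apply, Matrix.of_apply, Matrix.transpose_apply,
      Matrix.submatrix_apply, E, mul_ite, mul_one, mul_zero]
    rw [Finset.sum_ite_eq]
    simp
  calc k - 1 ≤ (colorMatrix k k id).rank := colorMatrix_id_rank k hk
    _ = ((colorMatrix k k id).submatrix σ σ).rank := (Matrix.rank_submatrix _ σ σ).symm
    _ = (E * colorMatrix n k c * Eᵀ).rank := by rw [hE, hsub]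
    _ ≤ (E * colorMatrix n k c).rank := Matrix.rank_mul_le_left _ _
    _ ≤ (colorMatrix n k c).rank := Matrix.rank_mul_le_right _ _

lemma colorMatrix_ker_of_eq (n k : ℕ) (c : Fin n → Fin k) (u v : Fin n) (h : c u = c v) :
    colorMatrix n k c *ᵥ (Pi.single u 1 - Pi.single v 1) = 0 := by
  rw [Matrix.mulVec_sub, Matrix.mulVec_single_one, Matrix.mulVec_single_one]
  funext i
  simp only [Pi.sub_apply, Pi.zero_apply, mul_one, Matrix.col_apply]
  have : colorMatrix n k c i u = colorMatrix n k c i v := by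
    simp only [colorMatrix, Matrix.of_apply, h]
  rw [this, sub_self]

lemma colorMatrix_notker_of_ne (n k : ℕ) (hk : 2 ≤ k) (c : Fin n → Fin k) (u v : Fin n)
    (h : c u ≠ c v) :
    colorMatrix n k c *ᵥ (Pi.single u 1 - Pi.single v 1) ≠ 0 := by
  intro h0
  have h1 := congrFun h0 u
  rw [Matrix.mulVec_sub, Matrix.mulVec_single_one, Matrix.mulVec_single_one] at h1
  simp only [Pi.sub_apply, Pi.zero_apply, mul_one, Matrix.col_apply] at h1
  have hu : colorMatrix n k c u u = 1 := by simp [colorMatrix]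
  have hv : colorMatrix n k c u v = -1 / ((k : ℝ) - 1) := by simp [colorMatrix, h]
  rw [hu, hv] at h1
  have hk1 : (2 : ℝ) ≤ (k : ℝ) := by exact_mod_cast hk
  have hpos : (0 : ℝ) < (k : ℝ) - 1 := by linarith
  rw [div_eq_mul_inv] at h1
  nlinarith [mul_pos hpos (inv_pos.mpr hpos)]

theorem convex_combination_rank_gt (n k : ℕ) (G : SimpleGraph (Fin n))
    (K : Finset (Fin n)) (hK : G.IsNClique k K)
    (c₁ c₂ : G.Coloring (Fin k))
    (hagree : ∀ i ∈ K, c₁ i = c₂ i)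
    (hdiff : ∃ u v : Fin n, ¬ (c₁ u = c₁ v ↔ c₂ u = c₂ v))
    (α : ℝ) (hα : α ∈ Set.Ioo (0 : ℝ) 1) :
    (α • colorMatrix n k c₁ + (1 - α) • colorMatrix n k c₂).PosSemidef ∧
    k - 1 < (α • colorMatrix n k c₁ + (1 - α) • colorMatrix n k c₂).rank := by
  obtain ⟨hα0, hα1⟩ := hα
  obtain ⟨u, v, huv⟩ := hdiff
  have hk2 : 2 ≤ k := by
    by_contra h
    push_neg at h
    interval_cases k
    · exact (c₁ u).elim0
    · exact huv ⟨fun _ => Subsingleton.elim _ _, fun _ => Subsingleton.elim _ _⟩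
  set C₁ := colorMatrix n k c₁ with hC₁
  set C₂ := colorMatrix n k c₂ with hC₂
  have psd₁ := colorMatrix_posSemidef n k hk2 c₁
  have psd₂ := colorMatrix_posSemidef n k hk2 c₂
  set A := α • C₁ + (1 - α) • C₂ with hA
  have hquad : ∀ x : Fin n → ℝ, x ⬝ᵥ (A *ᵥ x)
      = α * (x ⬝ᵥ (C₁ *ᵥ x)) + (1 - α) * (x ⬝ᵥ (C₂ *ᵥ x)) := by
    intro x
    rw [hA, Matrix.add_mulVec, Matrix.smul_mulVec, Matrix.smul_mulVec,
      dotProduct_add, dotProduct_smul, dotProduct_smul]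
    rfl
  have hstar : ∀ x : Fin n → ℝ, star x = x := fun x => by simp
  have q1 : ∀ x, 0 ≤ x ⬝ᵥ (C₁ *ᵥ x) := fun x => by
    have := psd₁.dotProduct_mulVec_nonneg x; rwa [hstar] at this
  have q2 : ∀ x, 0 ≤ x ⬝ᵥ (C₂ *ᵥ x) := fun x => by
    have := psd₂.dotProduct_mulVec_nonneg x; rwa [hstar] at this
  have psdA : A.PosSemidef := by
    refine Matrix.PosSemidef.of_dotProduct_mulVec_nonneg ?_ ?_
    · show Aᴴ = A
      rw [hA, Matrix.conjTranspose_add, Matrix.conjTranspose_smul, Matrix.conjTranspose_smul,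
        psd₁.1, psd₂.1, star_trivial, star_trivial]
    · intro x
      rw [hstar, hquad]
      have := q1 x; have := q2 x
      nlinarith
  refine ⟨psdA, ?_⟩
  -- the embedding of the clique
  have hcard : Fintype.card ↥K = k := by rw [Fintype.card_coe, hK.card_eq]
  let e := (Fintype.equivFinOfCardEq hcard).symm
  let emb : Fin k → Fin n := fun a => (e a : Fin n)
  have hinj : ∀ (c : G.Coloring (Fin k)), Function.Injective (⇑c ∘ emb) := by
    intro c a b hab
    by_contra hne
    have h1 : (e a : Fin n) ∈ K := (e a).2
    have h2 : (e b : Fin n) ∈ K := (e b).2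
    have hne' : (e a : Fin n) ≠ (e b : Fin n) := by
      intro h
      exact hne (e.injective (Subtype.ext h))
    have hadj : G.Adj (e a : Fin n) (e b : Fin n) :=
      hK.isClique h1 h2 hne'
    exact c.valid hadj hab
  have rk1 : k - 1 ≤ C₁.rank := colorMatrix_rank_ge n k hk2 c₁ emb (hinj c₁)
  have rk2 : k - 1 ≤ C₂.rank := colorMatrix_rank_ge n k hk2 c₂ emb (hinj c₂)
  have rn1 := rank_add_nullity n C₁
  have rn2 := rank_add_nullity n C₂
  have rnA := rank_add_nullity n A
  have hkerA : LinearMap.ker A.mulVecLin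
      = LinearMap.ker C₁.mulVecLin ⊓ LinearMap.ker C₂.mulVecLin := by
    apply le_antisymm
    · intro x hx
      have hx' : A *ᵥ x = 0 := hx
      have h0 : x ⬝ᵥ (A *ᵥ x) = 0 := by rw [hx']; simp
      rw [hquad x] at h0
      have hq1 : x ⬝ᵥ (C₁ *ᵥ x) = 0 := by nlinarith [q1 x, q2 x]
      have hq2 : x ⬝ᵥ (C₂ *ᵥ x) = 0 := by nlinarith [q1 x, q2 x]
      constructor
      · show x ∈ LinearMap.ker C₁.mulVecLin
        rw [LinearMap.mem_ker, Matrix.mulVecLin_apply]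
        exact (psd₁.dotProduct_mulVec_zero_iff x).mp (by rwa [hstar])
      · show x ∈ LinearMap.ker C₂.mulVecLin
        rw [LinearMap.mem_ker, Matrix.mulVecLin_apply]
        exact (psd₂.dotProduct_mulVec_zero_iff x).mp (by rwa [hstar])
    · intro x hx
      obtain ⟨h1, h2⟩ := hx
      have h1' : C₁ *ᵥ x = 0 := h1
      have h2' : C₂ *ᵥ x = 0 := h2
      show A *ᵥ x = 0
      rw [hA, Matrix.add_mulVec, Matrix.smul_mulVec, Matrix.smul_mulVec,
        h1', h2', smul_zero, smul_zero, add_zero]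
  rw [hkerA] at rnA
  set x₀ : Fin n → ℝ := Pi.single u 1 - Pi.single v 1 with hx₀
  have hcases : (c₁ u = c₁ v ∧ ¬ c₂ u = c₂ v) ∨ (¬ c₁ u = c₁ v ∧ c₂ u = c₂ v) := by
    tauto
  have hlt : Module.finrank ℝ
        ↥(LinearMap.ker C₁.mulVecLin ⊓ LinearMap.ker C₂.mulVecLin)
      < Module.finrank ℝ ↥(LinearMap.ker C₁.mulVecLin) ∨
      Module.finrank ℝ
        ↥(LinearMap.ker C₁.mulVecLin ⊓ LinearMap.ker C₂.mulVecLin)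
      < Module.finrank ℝ ↥(LinearMap.ker C₂.mulVecLin) := by
    rcases hcases with ⟨h1, h2⟩ | ⟨h1, h2⟩
    · left
      apply Submodule.finrank_lt_finrank_of_lt
      apply lt_of_le_of_ne inf_le_left
      intro heq
      have hmem : x₀ ∈ LinearMap.ker C₁.mulVecLin := by
        rw [LinearMap.mem_ker, Matrix.mulVecLin_apply]
        exact colorMatrix_ker_of_eq n k c₁ u v h1
      rw [← heq] at hmem
      exact colorMatrix_notker_of_ne n k hk2 c₂ u v h2 hmem.2
    · right
      apply Submodule.finrank_lt_finrank_of_lt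
      apply lt_of_le_of_ne inf_le_right
      intro heq
      have hmem : x₀ ∈ LinearMap.ker C₂.mulVecLin := by
        rw [LinearMap.mem_ker, Matrix.mulVecLin_apply]
        exact colorMatrix_ker_of_eq n k c₂ u v h2
      rw [← heq] at hmem
      exact colorMatrix_notker_of_ne n k hk2 c₁ u v h1 hmem.1
  rcases hlt with hlt | hlt <;> omega
end

section
/- Let G be a k-colorable graph on n vertices containing a k-clique, with a fixed proper k-coloring c, and let C(G) be the cost matrix with C(G)_{ij} = -1 when j is the next vertex after i (in the vertex ordering) with the same color as i (and symmetrically), and 0 otherwise. Then the dual slack matrix S built from the assignment y_i = s_i - [i ∈ K], z_e = -1 for edges e inside the clique K and 0 otherwise (where s_i is the i-th column sum of C(G)) is positive semidefinite. -/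
/-- The coloring-dependent cost matrix `C(G)`: entry `(i,j)` is `-1` when `i ≠ j`, `i` and
`j` receive the same color, and no vertex strictly between them receives that color;
all other entries are `0`. -/
def costMatrix (n k : ℕ) (c : Fin n → Fin k) : Matrix (Fin n) (Fin n) ℝ :=
  Matrix.of fun i j =>
    if i ≠ j ∧ c i = c j ∧ ∀ ℓ : Fin n, min i j < ℓ → ℓ < max i j → c ℓ ≠ c i then -1
    else 0

lemma costMatrix_comm (n k : ℕ) (c : Fin n → Fin k) (i j : Fin n) :
    costMatrix n k c i j = costMatrix n k c j i := by
  unfold costMatrix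
  simp only [Matrix.of_apply]
  refine if_congr ?_ rfl rfl
  constructor
  · rintro ⟨h1, h2, h3⟩
    refine ⟨h1.symm, h2.symm, fun ℓ ha hb => ?_⟩
    have := h3 ℓ (by rwa [min_comm]) (by rwa [max_comm])
    rwa [h2] at this
  · rintro ⟨h1, h2, h3⟩
    refine ⟨h1.symm, h2.symm, fun ℓ ha hb => ?_⟩
    have := h3 ℓ (by rwa [min_comm]) (by rwa [max_comm])
    rwa [h2] at this

lemma costMatrix_nonpos (n k : ℕ) (c : Fin n → Fin k) (i j : Fin n) :
    costMatrix n k c i j ≤ 0 := by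
  unfold costMatrix
  simp only [Matrix.of_apply]
  split <;> norm_num

lemma lap_posSemidef (n k : ℕ) (c : Fin n → Fin k) :
    (costMatrix n k c -
      Matrix.diagonal (fun i : Fin n => ∑ j : Fin n, costMatrix n k c j i)).PosSemidef := by
  rw [Matrix.posSemidef_iff_dotProduct_mulVec]
  constructor
  · show _ = _
    ext i j
    simp only [Matrix.conjTranspose_apply, Matrix.sub_apply, Matrix.diagonal_apply, star_sub,
      star_trivial]
    rw [costMatrix_comm n k c j i]
    congr 1
    by_cases h : i = j <;> simp [h, eq_comm]
  · intro x
    have hx : star x = x := by ext i; simp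
    have key : dotProduct (star x)
        ((costMatrix n k c -
          Matrix.diagonal (fun i : Fin n => ∑ j : Fin n, costMatrix n k c j i)).mulVec x)
        = (1/2) * ∑ i : Fin n, ∑ j : Fin n, (-(costMatrix n k c i j)) * (x i - x j)^2 := by
      rw [hx]
      have lhs : dotProduct x
          ((costMatrix n k c -
            Matrix.diagonal (fun i : Fin n => ∑ j : Fin n, costMatrix n k c j i)).mulVec x)
          = (∑ i : Fin n, ∑ j : Fin n, costMatrix n k c i j * (x i * x j))
            - ∑ i : Fin n, ∑ j : Fin n, costMatrix n k c j i * (x i * x i) := by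
        simp only [dotProduct, Matrix.mulVec, Matrix.sub_apply, Matrix.diagonal_apply,
          dotProduct, sub_mul, Finset.sum_sub_distrib]
        rw [← Finset.sum_sub_distrib]
        refine Finset.sum_congr rfl fun i _ => ?_
        rw [mul_sub]
        congr 1
        · rw [Finset.mul_sum]
          exact Finset.sum_congr rfl fun j _ => by ring
        · have h1 : (∑ j : Fin n,
              (if i = j then (∑ l : Fin n, costMatrix n k c l i) else 0) * x j)
              = (∑ l : Fin n, costMatrix n k c l i) * x i := by
            simp only [ite_mul, zero_mul, Finset.sum_ite_eq, Finset.mem_univ, if_true]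
          rw [h1, ← Finset.sum_mul]
          ring
      have e1 : ∀ i j : Fin n, (-(costMatrix n k c i j)) * (x i - x j)^2
          = -(costMatrix n k c i j * (x i * x i)) - (costMatrix n k c i j * (x j * x j))
            + 2 * (costMatrix n k c i j * (x i * x j)) := by
        intro i j; ring
      have hB : ∑ i : Fin n, ∑ j : Fin n, costMatrix n k c i j * (x j * x j)
          = ∑ i : Fin n, ∑ j : Fin n, costMatrix n k c j i * (x i * x i) :=
        Finset.sum_comm
      have hA : ∑ i : Fin n, ∑ j : Fin n, costMatrix n k c i j * (x i * x i)
          = ∑ i : Fin n, ∑ j : Fin n, costMatrix n k c j i * (x i * x i) :=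
        Finset.sum_congr rfl fun i _ => Finset.sum_congr rfl fun j _ => by
          rw [costMatrix_comm n k c i j]
      rw [lhs]
      simp only [e1, Finset.sum_add_distrib, Finset.sum_sub_distrib, Finset.sum_neg_distrib]
      rw [hB, hA]
      rw [show ∑ i : Fin n, ∑ j : Fin n, 2 * (costMatrix n k c i j * (x i * x j))
          = 2 * ∑ i : Fin n, ∑ j : Fin n, costMatrix n k c i j * (x i * x j) by
        rw [Finset.mul_sum]; exact Finset.sum_congr rfl fun i _ => (Finset.mul_sum _ _ _).symm]
      ring
    rw [key]
    have h1 : ∀ i ∈ (Finset.univ : Finset (Fin n)),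
        0 ≤ ∑ j : Fin n, (-(costMatrix n k c i j)) * (x i - x j)^2 := fun i _ =>
      Finset.sum_nonneg fun j _ =>
        mul_nonneg (by linarith [costMatrix_nonpos n k c i j]) (sq_nonneg _)
    have := Finset.sum_nonneg h1
    linarith

lemma clique_part (n : ℕ) (K : Finset (Fin n)) :
    Matrix.diagonal (fun i : Fin n => if i ∈ K then (1:ℝ) else 0)
      + ∑ p ∈ (K ×ˢ K).filter (fun p : Fin n × Fin n => p.1 < p.2),
          (Matrix.single p.1 p.2 (1 : ℝ) + Matrix.single p.2 p.1 1)
    = Matrix.of fun i j => (if i ∈ K then (1:ℝ) else 0) * (if j ∈ K then 1 else 0) := by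
  ext i j
  simp only [Matrix.add_apply, Matrix.sum_apply, Matrix.diagonal_apply, Matrix.of_apply,
    Matrix.single, Matrix.of_apply]
  have conv1 : ∀ p : Fin n × Fin n,
      ((if p.1 = i ∧ p.2 = j then (1:ℝ) else 0) + (if p.2 = i ∧ p.1 = j then 1 else 0))
      = (if p = (i, j) then (1:ℝ) else 0) + (if p = (j, i) then 1 else 0) := by
    intro p
    congr 1 <;> refine if_congr ?_ rfl rfl <;> rw [Prod.ext_iff] <;> tauto
  rw [Finset.sum_congr rfl fun p _ => conv1 p, Finset.sum_add_distrib,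
    Finset.sum_ite_eq' _ (i, j), Finset.sum_ite_eq' _ (j, i)]
  simp only [Finset.mem_filter, Finset.mem_product]
  rcases lt_trichotomy i j with h | h | h
  · have hne : ¬ i = j := ne_of_lt h
    by_cases hi : i ∈ K <;> by_cases hj : j ∈ K <;>
      simp [hne, hi, hj, h, not_lt_of_gt h]
  · subst h
    by_cases hi : i ∈ K <;> simp [hi]
  · have hne : ¬ i = j := (ne_of_lt h).symm
    by_cases hi : i ∈ K <;> by_cases hj : j ∈ K <;>
      simp [hne, hi, hj, h, not_lt_of_gt h]

lemma outer_posSemidef (n : ℕ) (v : Fin n → ℝ) :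
    (Matrix.of fun i j => v i * v j).PosSemidef := by
  rw [Matrix.posSemidef_iff_dotProduct_mulVec]
  constructor
  · show _ = _
    ext i j
    simp [Matrix.conjTranspose_apply, mul_comm]
  · intro x
    have hx : star x = x := by ext i; simp
    have key : dotProduct (star x) ((Matrix.of fun i j => v i * v j).mulVec x)
        = (∑ i : Fin n, v i * x i)^2 := by
      rw [hx]
      rw [show ((∑ i : Fin n, v i * x i)^2
          = ∑ i : Fin n, ∑ j : Fin n, (v i * x i) * (v j * x j)) from by
        rw [sq, Finset.sum_mul_sum]]
      simp only [dotProduct, Matrix.mulVec, dotProduct, Matrix.of_apply]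
      refine Finset.sum_congr rfl fun i _ => ?_
      rw [Finset.mul_sum]
      exact Finset.sum_congr rfl fun j _ => by ring
    rw [key]
    exact sq_nonneg _

theorem cost_dual_slack_posSemidef (n k : ℕ) (G : SimpleGraph (Fin n))
    (K : Finset (Fin n)) (hK : G.IsNClique k K) (c : G.Coloring (Fin k)) :
    (costMatrix n k c
      - Matrix.diagonal (fun i : Fin n =>
          (∑ j : Fin n, costMatrix n k c j i) - (if i ∈ K then 1 else 0))
      + ∑ p ∈ (K ×ˢ K).filter (fun p : Fin n × Fin n => p.1 < p.2),
          (Matrix.single p.1 p.2 (1 : ℝ) +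
            Matrix.single p.2 p.1 1)).PosSemidef := by
  have hsplit : (costMatrix n k c
      - Matrix.diagonal (fun i : Fin n =>
          (∑ j : Fin n, costMatrix n k c j i) - (if i ∈ K then 1 else 0))
      + ∑ p ∈ (K ×ˢ K).filter (fun p : Fin n × Fin n => p.1 < p.2),
          (Matrix.single p.1 p.2 (1 : ℝ) +
            Matrix.single p.2 p.1 1))
      = (costMatrix n k c -
          Matrix.diagonal (fun i : Fin n => ∑ j : Fin n, costMatrix n k c j i))
        + (Matrix.diagonal (fun i : Fin n => if i ∈ K then (1:ℝ) else 0)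
          + ∑ p ∈ (K ×ˢ K).filter (fun p : Fin n × Fin n => p.1 < p.2),
              (Matrix.single p.1 p.2 (1 : ℝ) + Matrix.single p.2 p.1 1)) := by
    ext i j
    simp only [Matrix.add_apply, Matrix.sub_apply, Matrix.diagonal_apply]
    split_ifs <;> ring
  rw [hsplit, clique_part]
  exact (lap_posSemidef n k c).add (outer_posSemidef n (fun i => if i ∈ K then 1 else 0))
end
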